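/- Let L ⊂ M_n(ℂ) be a rank-2n lattice of diagonal matrices (a diagonal number field code) with the property that |det(X X*)| ≥ 1 for every nonzero X ∈ L, and such that for every m ≥ 1 there is a constant K with ∑_{X ∈ L, 0 < ‖X‖_F ≤ M} |det(X X*)|^{−m} ≤ K (log M)^{3n−1} for all M ≥ 2. Then for every real m > 1 there is a constant K' such that for all c ≥ 1 and all M, ∑_{X ∈ L, 0 < ‖X‖_F ≤ M} det(I + c X X*)^{−m} ≤ K' c^{−nm+1}. -/

import Mathlib

open Matrix

/-- The Frobenius norm of a complex matrix. -/
noncomputable def frobNorm {n T : ℕ} (X : Matrix (Fin n) (Fin T) ℂ) : ℝ :=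
  Real.sqrt (((X * Xᴴ).trace).re)

set_option maxHeartbeats 1000000

open Finset

lemma frobNorm_nonneg {n T : ℕ} (X : Matrix (Fin n) (Fin T) ℂ) : 0 ≤ frobNorm X :=
  Real.sqrt_nonneg _

lemma max_ge_one {n : ℕ} (l : Fin n → ℝ) (hpos : ∀ i, 0 ≤ l i) (hP : 1 ≤ ∏ i, l i)
    {i₁ : Fin n} (hmax : ∀ j, l j ≤ l i₁) : 1 ≤ l i₁ := by
  have hn : 0 < n := i₁.pos
  have h1 : (∏ i, l i) ≤ l i₁ ^ n := by
    calc (∏ i, l i) ≤ ∏ _i : Fin n, l i₁ :=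
          Finset.prod_le_prod (fun i _ => hpos i) (fun i _ => hmax i)
      _ = l i₁ ^ n := by rw [Finset.prod_const, Finset.card_univ, Fintype.card_fin]
  have h0 : 0 ≤ l i₁ := hpos i₁
  exact (one_le_pow_iff_of_nonneg h0 hn.ne').mp (le_trans hP h1)


lemma boundA {n : ℕ} (l : Fin n → ℝ) (hpos : ∀ i, 0 ≤ l i) {c : ℝ} (hc : 1 ≤ c) :
    c ^ n * ∏ i, l i ≤ ∏ i, (1 + c * l i) := by
  have h0 : ∀ i ∈ Finset.univ (α := Fin n), 0 ≤ c * l i := fun i _ => by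
    have := hpos i; nlinarith
  calc c ^ n * ∏ i, l i = ∏ i, (c * l i) := by
        rw [Finset.prod_mul_distrib, Finset.prod_const, Finset.card_univ, Fintype.card_fin]
      _ ≤ ∏ i, (1 + c * l i) :=
        Finset.prod_le_prod h0 (fun i _ => by linarith [h0 i (Finset.mem_univ i)])

lemma oneleD {n : ℕ} (l : Fin n → ℝ) (hpos : ∀ i, 0 ≤ l i) {c : ℝ} (hc : 1 ≤ c) :
    (1:ℝ) ≤ ∏ i, (1 + c * l i) := by
  calc (1:ℝ) = ∏ _i : Fin n, (1:ℝ) := by simp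
    _ ≤ ∏ i, (1 + c * l i) :=
      Finset.prod_le_prod (fun i _ => by norm_num) (fun i _ => by nlinarith [hpos i])

lemma boundB {n : ℕ} (l : Fin n → ℝ) (hpos : ∀ i, 0 < l i) (hP : 1 ≤ ∏ i, l i)
    {c : ℝ} (hc : 1 ≤ c) {i₁ : Fin n} (hmax : ∀ j, l j ≤ l i₁) :
    c ^ (n - 1) * l i₁ ^ ((1 : ℝ) / (max (n-1) 1 : ℕ)) ≤ ∏ i, (1 + c * l i) := by
  have hn : 0 < n := i₁.pos
  have hμ : 0 < l i₁ := hpos i₁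
  have hμ1 : 1 ≤ l i₁ := by
    have h1 : (∏ i, l i) ≤ l i₁ ^ n := by
      calc (∏ i, l i) ≤ ∏ _i : Fin n, l i₁ :=
            Finset.prod_le_prod (fun i _ => (hpos i).le) (fun i _ => hmax i)
        _ = l i₁ ^ n := by rw [Finset.prod_const, Finset.card_univ, Fintype.card_fin]
    exact (one_le_pow_iff_of_nonneg hμ.le hn.ne').mp (le_trans hP h1)
  rcases Nat.lt_or_ge n 2 with h2 | h2
  · -- n = 1
    interval_cases n
    have he : (max (1-1) 1 : ℕ) = 1 := rfl
    rw [he]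
    have hi10 : i₁ = 0 := Subsingleton.elim _ _
    have hp : ∏ i, (1 + c * l i) = 1 + c * l i₁ := by
      rw [Fin.prod_univ_one, hi10]
    rw [hp]
    norm_num
    nlinarith
  · -- n ≥ 2
    have hmax1 : max (n-1) 1 = n - 1 := max_eq_left (by omega)
    rw [hmax1]
    set q : ℝ := (1:ℝ) / ((n-1 : ℕ) : ℝ) with hq
    have hn1 : (0:ℝ) < ((n-1:ℕ):ℝ) := by
      have : 1 ≤ n - 1 := by omega
      exact_mod_cast Nat.lt_of_lt_of_le Nat.zero_lt_one this
    have hq0 : 0 ≤ q := by positivity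
    have hq1 : q ≤ 1 := by
      rw [hq, div_le_one hn1]; exact_mod_cast Nat.one_le_iff_ne_zero.mpr (by omega)
    set P := ∏ i, l i with hPdef
    have hPpos : (0:ℝ) < P := lt_of_lt_of_le one_pos hP
    have hsne : (Finset.univ.erase i₁).Nonempty := by
      rw [← Finset.card_pos, Finset.card_erase_of_mem (Finset.mem_univ _), Finset.card_univ,
        Fintype.card_fin]
      omega
    obtain ⟨i₀, hi₀mem, hi₀⟩ := Finset.exists_mem_eq_inf' hsne l
    have hνpos : 0 < l i₀ := hpos i₀
    have hcard : (Finset.univ.erase i₁).card = n - 1 := by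
      rw [Finset.card_erase_of_mem (Finset.mem_univ _), Finset.card_univ, Fintype.card_fin]
    have hprod_erase1 : ∏ j ∈ Finset.univ.erase i₁, l j = P / l i₁ := by
      rw [eq_div_iff hμ.ne', mul_comm]
      exact Finset.mul_prod_erase Finset.univ l (Finset.mem_univ i₁)
    have hprod_erase0 : ∏ j ∈ Finset.univ.erase i₀, l j = P / l i₀ := by
      rw [eq_div_iff hνpos.ne', mul_comm]
      exact Finset.mul_prod_erase Finset.univ l (Finset.mem_univ i₀)
    have hνpow : l i₀ ^ (n-1 : ℕ) ≤ P / l i₁ := by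
      calc l i₀ ^ (n-1:ℕ) = ∏ _j ∈ Finset.univ.erase i₁, l i₀ := by
            rw [Finset.prod_const, hcard]
        _ ≤ ∏ j ∈ Finset.univ.erase i₁, l j :=
            Finset.prod_le_prod (fun _ _ => hνpos.le)
              (fun j hj => hi₀ ▸ Finset.inf'_le l hj)
        _ = P / l i₁ := hprod_erase1
    have hν_le : l i₀ ≤ (P / l i₁) ^ q := by
      have h1 : ((l i₀ ^ (n-1:ℕ) : ℝ)) ^ q ≤ (P / l i₁) ^ q :=
        Real.rpow_le_rpow (by positivity) hνpow hq0
      rwa [← Real.rpow_natCast (l i₀) (n-1), ← Real.rpow_mul hνpos.le, hq, mul_one_div,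
        div_self hn1.ne', Real.rpow_one] at h1
    have key : c ^ (n-1:ℕ) * (P / l i₀) ≤ ∏ i, (1 + c * l i) := by
      calc c ^ (n-1:ℕ) * (P / l i₀) = ∏ j ∈ Finset.univ.erase i₀, (c * l j) := by
            rw [Finset.prod_mul_distrib, Finset.prod_const, Finset.card_erase_of_mem
              (Finset.mem_univ _), Finset.card_univ, Fintype.card_fin, hprod_erase0]
        _ ≤ ∏ j ∈ Finset.univ.erase i₀, (1 + c * l j) :=
            Finset.prod_le_prod (fun j _ => by nlinarith [(hpos j).le])
              (fun j _ => by nlinarith [(hpos j).le])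
        _ ≤ (1 + c * l i₀) * ∏ j ∈ Finset.univ.erase i₀, (1 + c * l j) := by
            refine le_mul_of_one_le_left ?_ (by nlinarith [hνpos.le])
            exact Finset.prod_nonneg (fun j _ => by nlinarith [(hpos j).le])
        _ = ∏ i, (1 + c * l i) := Finset.mul_prod_erase Finset.univ (fun i => 1 + c * l i) (Finset.mem_univ i₀)
    have hfinal : l i₁ ^ q ≤ P / l i₀ := by
      have hwpos : (0:ℝ) < (P / l i₁) ^ q := Real.rpow_pos_of_pos (by positivity) q
      have h5 : P / (P / l i₁) ^ q ≤ P / l i₀ :=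
        div_le_div_of_nonneg_left hPpos.le hνpos hν_le
      refine le_trans ?_ h5
      rw [Real.div_rpow hPpos.le hμ.le, div_div_eq_mul_div, mul_div_right_comm]
      have hPq : (1:ℝ) ≤ P / P ^ q := by
        have h6 : P ^ ((1:ℝ) - q) = P / P ^ q := by
          rw [Real.rpow_sub hPpos, Real.rpow_one]
        have h7 : P ^ (0:ℝ) ≤ P ^ ((1:ℝ) - q) :=
          Real.rpow_le_rpow_of_exponent_le hP (by linarith)
        rwa [Real.rpow_zero, h6] at h7
      exact le_mul_of_one_le_left (Real.rpow_nonneg hμ.le q) hPq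
    calc c ^ (n-1) * l i₁ ^ q ≤ c ^ (n-1) * (P / l i₀) :=
          mul_le_mul_of_nonneg_left hfinal (by positivity)
      _ ≤ ∏ i, (1 + c * l i) := key

lemma pointwise {n : ℕ} (hn : 0 < n) (l : Fin n → ℝ) (hpos : ∀ i, 0 < l i) (hP : 1 ≤ ∏ i, l i)
    {c m a : ℝ} (hc : 1 ≤ c) (ha0 : 0 < a) (ha1 : a ≤ 1) (ham : a ≤ m)
    {i₁ : Fin n} (hmax : ∀ j, l j ≤ l i₁) :
    1 / (∏ i, (1 + c * l i)) ^ m ≤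
      c ^ (1 - (n:ℝ) * m) / ((∏ i, l i) ^ (m - a) *
        l i₁ ^ (a * ((1:ℝ)/((max (n-1) 1 : ℕ) : ℝ)))) := by
  set q : ℝ := (1:ℝ)/(((max (n-1) 1 : ℕ)) : ℝ) with hqdef
  set D := ∏ i, (1 + c * l i) with hDdef
  set P := ∏ i, l i with hPdef
  have hc0 : (0:ℝ) < c := lt_of_lt_of_le one_pos hc
  have hPpos : (0:ℝ) < P := lt_of_lt_of_le one_pos hP
  have hμpos : 0 < l i₁ := hpos i₁
  have hD1 : (1:ℝ) ≤ D := oneleD l (fun i => (hpos i).le) hc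
  have hDpos : (0:ℝ) < D := lt_of_lt_of_le one_pos hD1
  have hq0 : 0 ≤ q := by positivity
  have hA : c ^ ((n:ℝ)) * P ≤ D := by
    rw [Real.rpow_natCast]; exact boundA l (fun i => (hpos i).le) hc
  have hB : c ^ (((n:ℝ) - 1)) * l i₁ ^ q ≤ D := by
    have h := boundB l hpos hP hc hmax
    rwa [← Real.rpow_natCast c (n-1), Nat.cast_sub hn, Nat.cast_one] at h
  have hkey : c ^ ((n:ℝ)*m - 1) * (P ^ (m-a) * l i₁ ^ (a*q)) ≤ D ^ m := by
    have hDm : D ^ m = D ^ (m-a) * D ^ a := by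
      rw [← Real.rpow_add hDpos]; ring_nf
    have h1 : (c ^ ((n:ℝ)) * P) ^ (m-a) ≤ D ^ (m-a) :=
      Real.rpow_le_rpow (by positivity) hA (by linarith)
    have h2 : (c ^ ((n:ℝ) - 1) * l i₁ ^ q) ^ a ≤ D ^ a :=
      Real.rpow_le_rpow (by positivity) hB ha0.le
    have h3 : (c ^ ((n:ℝ)) * P) ^ (m-a) = c ^ ((n:ℝ)*(m-a)) * P ^ (m-a) := by
      rw [Real.mul_rpow (by positivity) hPpos.le, ← Real.rpow_mul hc0.le]
    have h4 : (c ^ ((n:ℝ) - 1) * l i₁ ^ q) ^ a = c ^ (((n:ℝ)-1)*a) * l i₁ ^ (a*q) := by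
      rw [Real.mul_rpow (by positivity) (by positivity), ← Real.rpow_mul hc0.le,
        ← Real.rpow_mul hμpos.le, mul_comm q a]
    have h5 : c ^ ((n:ℝ)*m - 1) ≤ c ^ ((n:ℝ)*(m-a) + ((n:ℝ)-1)*a) := by
      apply Real.rpow_le_rpow_of_exponent_le hc
      have hn1 : (1:ℝ) ≤ (n:ℝ) := by exact_mod_cast hn
      nlinarith
    calc c ^ ((n:ℝ)*m - 1) * (P ^ (m-a) * l i₁ ^ (a*q))
        ≤ c ^ ((n:ℝ)*(m-a) + ((n:ℝ)-1)*a) * (P ^ (m-a) * l i₁ ^ (a*q)) :=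
          mul_le_mul_of_nonneg_right h5 (by positivity)
      _ = (c ^ ((n:ℝ)) * P) ^ (m-a) * ((c ^ ((n:ℝ) - 1) * l i₁ ^ q) ^ a) := by
          rw [h3, h4, Real.rpow_add hc0]; ring
      _ ≤ D ^ (m-a) * D ^ a :=
          mul_le_mul h1 h2 (by positivity) (by positivity)
      _ = D ^ m := hDm.symm
  have hrhs : (0:ℝ) < c ^ ((n:ℝ)*m - 1) * (P ^ (m-a) * l i₁ ^ (a*q)) := by positivity
  refine le_trans (one_div_le_one_div_of_le hrhs hkey) ?_
  have hcn : c ^ (1-(n:ℝ)*m) = (c ^ ((n:ℝ)*m-1))⁻¹ := by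
    rw [← Real.rpow_neg hc0.le]; ring_nf
  rw [div_eq_mul_inv, hcn, mul_inv, one_mul]
  rw [div_eq_mul_inv]



lemma diag_mul_ct {n : ℕ} (X : Matrix (Fin n) (Fin n) ℂ) (h : X.IsDiag) :
    X * Xᴴ = Matrix.diagonal (fun i => (Complex.normSq (X i i) : ℂ)) := by
  ext i k
  rw [Matrix.mul_apply]
  simp only [Matrix.conjTranspose_apply]
  by_cases hik : i = k
  · subst hik
    rw [Finset.sum_eq_single i]
    · simp [Matrix.diagonal, Complex.mul_conj]
    · intro j _ hj
      rw [h (Ne.symm hj)]; simp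
    · simp
  · rw [Finset.sum_eq_zero, Matrix.diagonal_apply_ne _ hik]
    intro j _
    by_cases hji : j = i
    · subst hji
      rw [h (fun hh => hik hh.symm)]; simp
    · rw [h (fun hh => hji hh.symm)]; simp

lemma trace_re {n : ℕ} (X : Matrix (Fin n) (Fin n) ℂ) (h : X.IsDiag) :
    ((X * Xᴴ).trace).re = ∑ i, Complex.normSq (X i i) := by
  rw [diag_mul_ct X h, Matrix.trace_diagonal]
  rw [Complex.re_sum]
  simp

lemma abs_det {n : ℕ} (X : Matrix (Fin n) (Fin n) ℂ) (h : X.IsDiag) :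
    ‖(X * Xᴴ).det‖ = ∏ i, Complex.normSq (X i i) := by
  rw [diag_mul_ct X h, Matrix.det_diagonal]
  rw [norm_prod]
  refine Finset.prod_congr rfl (fun i _ => ?_)
  rw [Complex.norm_real, Real.norm_eq_abs, abs_of_nonneg (Complex.normSq_nonneg _)]

lemma det_one_add_re {n : ℕ} (X : Matrix (Fin n) (Fin n) ℂ) (h : X.IsDiag) (c : ℝ) :
    (((1 : Matrix (Fin n) (Fin n) ℂ) + (c : ℂ) • (X * Xᴴ)).det).re
      = ∏ i, (1 + c * Complex.normSq (X i i)) := by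
  rw [diag_mul_ct X h]
  have h1 : (1 : Matrix (Fin n) (Fin n) ℂ) + (c : ℂ) • Matrix.diagonal
      (fun i => (Complex.normSq (X i i) : ℂ))
      = Matrix.diagonal (fun i => ((1 + c * Complex.normSq (X i i) : ℝ) : ℂ)) := by
    rw [← Matrix.diagonal_one, ← Matrix.diagonal_smul, Matrix.diagonal_add]
    congr 1
    funext i
    simp only [Pi.add_apply, Pi.smul_apply, smul_eq_mul]
    push_cast
    ring
  rw [h1, Matrix.det_diagonal]
  have h2 : (∏ i, ((1 + c * Complex.normSq (X i i) : ℝ) : ℂ))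
      = ((∏ i, (1 + c * Complex.normSq (X i i)) : ℝ) : ℂ) := by
    push_cast; ring
  rw [h2, Complex.ofReal_re]

lemma frob_sq {n : ℕ} (X : Matrix (Fin n) (Fin n) ℂ) (h : X.IsDiag) :
    (frobNorm X) ^ 2 = ∑ i, Complex.normSq (X i i) := by
  rw [frobNorm, Real.sq_sqrt, trace_re X h]
  rw [trace_re X h]
  exact Finset.sum_nonneg (fun i _ => Complex.normSq_nonneg _)



section Finiteness

attribute [local instance] Matrix.frobeniusNormedAddCommGroup Matrix.frobeniusNormedSpace

lemma frob_eq_norm {n : ℕ} (X : Matrix (Fin n) (Fin n) ℂ) : frobNorm X = ‖X‖ := by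
  rw [Matrix.frobenius_norm_def, frobNorm]
  have h : ((X * Xᴴ).trace).re = ∑ i, ∑ j, ‖X i j‖ ^ 2 := by
    rw [Matrix.trace, Complex.re_sum]
    refine Finset.sum_congr rfl (fun i _ => ?_)
    rw [Matrix.diag_apply, Matrix.mul_apply, Complex.re_sum]
    refine Finset.sum_congr rfl (fun j _ => ?_)
    rw [Matrix.conjTranspose_apply]
    have hst : star (X i j) = (starRingEnd ℂ) (X i j) := rfl
    rw [hst, Complex.mul_conj]
    simp [Complex.normSq_eq_norm_sq, ← Complex.ofReal_pow]
  rw [h, Real.sqrt_eq_rpow]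
  norm_num

lemma lattice_finite {n : ℕ} (b : Fin (2*n) → Matrix (Fin n) (Fin n) ℂ)
    (hb : LinearIndependent ℝ b) (M : ℝ) :
    {X : Matrix (Fin n) (Fin n) ℂ | X ∈ Submodule.span ℤ (Set.range b) ∧ X ≠ 0
      ∧ frobNorm X ≤ M}.Finite := by
  have hsub := (linearIndepOn_id_range_iff hb.injective).mpr hb
  set s := hsub.extend (Set.subset_univ _) with hs
  let B : Module.Basis s ℝ (Matrix (Fin n) (Fin n) ℂ) := Module.Basis.extend hsub
  haveI : Fintype s := FiniteDimensional.fintypeBasisIndex B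
  haveI : DiscreteTopology (Submodule.span ℤ (Set.range B)) :=
    ZSpan.instDiscreteTopologySubtypeMemSubmoduleIntSpanRangeCoeBasisRealOfFinite B
  haveI : DiscreteTopology (Submodule.span ℤ (Set.range B)).toAddSubgroup :=
    inferInstanceAs <| DiscreteTopology (Submodule.span ℤ (Set.range B))
  have hrange : Set.range B = s := Module.Basis.range_extend hsub
  have hspan_le : Submodule.span ℤ (Set.range b) ≤ Submodule.span ℤ (Set.range B) := by
    apply Submodule.span_mono
    rw [hrange]
    exact hsub.subset_extend _
  have hclosed : IsClosed ((Submodule.span ℤ (Set.range B) : Submodule ℤ _) :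
      Set (Matrix (Fin n) (Fin n) ℂ)) :=
    AddSubgroup.isClosed_of_discrete
      (H := (Submodule.span ℤ (Set.range B)).toAddSubgroup)
  have hcomp : IsCompact (Metric.closedBall (0 : Matrix (Fin n) (Fin n) ℂ) |M| ∩
      (Submodule.span ℤ (Set.range B) : Set (Matrix (Fin n) (Fin n) ℂ))) :=
    (isCompact_closedBall 0 |M|).inter_right hclosed
  have hdisc : DiscreteTopology ↑(Metric.closedBall (0 : Matrix (Fin n) (Fin n) ℂ) |M| ∩
      (Submodule.span ℤ (Set.range B) : Set (Matrix (Fin n) (Fin n) ℂ))) :=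
    DiscreteTopology.of_subset
      (inferInstance : DiscreteTopology (Submodule.span ℤ (Set.range B)))
      Set.inter_subset_right
  refine Set.Finite.subset (hcomp.finite (isDiscrete_iff_discreteTopology.mpr hdisc)) ?_
  rintro X ⟨hX1, _, hX3⟩
  refine ⟨?_, hspan_le hX1⟩
  rw [Metric.mem_closedBall, dist_zero_right, ← frob_eq_norm]
  exact le_trans hX3 (le_abs_self M)

end Finiteness


lemma kappa_facts (r : ℝ) (hr : 0 ≤ r) :
    (r ≤ 2 ^ ((if r ≤ 4 then 0 else Nat.log 2 ⌊r⌋₊ - 1) + 2)) ∧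
    (1 ≤ (if r ≤ 4 then 0 else Nat.log 2 ⌊r⌋₊ - 1) →
      (2:ℝ) ^ ((if r ≤ 4 then 0 else Nat.log 2 ⌊r⌋₊ - 1) + 1) ≤ r) := by
  by_cases h4 : r ≤ 4
  · simp only [h4, if_true]
    constructor
    · norm_num; linarith
    · intro h; omega
  · simp only [h4, if_false]
    push_neg at h4
    have ht4 : 4 ≤ ⌊r⌋₊ := Nat.le_floor (by exact_mod_cast h4.le)
    have hl2 : 2 ≤ Nat.log 2 ⌊r⌋₊ := by
      calc 2 = Nat.log 2 4 := by norm_num [Nat.log]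
        _ ≤ Nat.log 2 ⌊r⌋₊ := Nat.log_mono_right ht4
    set l := Nat.log 2 ⌊r⌋₊ with hl
    constructor
    · have h1 : ⌊r⌋₊ < 2 ^ (l + 1) := Nat.lt_pow_succ_log_self (by norm_num) _
      have h2 : r < (⌊r⌋₊ : ℝ) + 1 := Nat.lt_floor_add_one r
      have h3 : (⌊r⌋₊ : ℝ) + 1 ≤ ((2:ℝ)) ^ (l + 1) := by
        have : ⌊r⌋₊ + 1 ≤ 2 ^ (l + 1) := h1
        exact_mod_cast this
      have hle : l - 1 + 2 = l + 1 := by omega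
      rw [hle]
      linarith
    · intro _
      have h1 : 2 ^ l ≤ ⌊r⌋₊ := Nat.pow_log_le_self 2 (by omega)
      have h2 : (⌊r⌋₊ : ℝ) ≤ r := Nat.floor_le hr
      have hle : l - 1 + 1 = l := by omega
      rw [hle]
      calc (2:ℝ) ^ l ≤ (⌊r⌋₊ : ℝ) := by exact_mod_cast h1
        _ ≤ r := h2

lemma dyadic {α : Type*} (G : Set α) (f w r : α → ℝ)
    (hf : ∀ x ∈ G, 0 ≤ f x) (hw1 : ∀ x ∈ G, w x ≤ 1)
    (hr : ∀ x, 0 ≤ r x)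
    {C ρ : ℝ} (hC : 0 ≤ C) (hρ0 : 0 < ρ) (hρ1 : ρ < 1)
    (hwr : ∀ x ∈ G, ∀ k : ℕ, (2:ℝ) ^ (k+1) ≤ r x → w x ≤ C * ρ ^ k)
    {K : ℝ} {p : ℕ}
    (hpart : ∀ k : ℕ, ∀ T : Finset α, (∀ x ∈ T, x ∈ G ∧ r x ≤ 2 ^ (k+2)) →
      ∑ x ∈ T, f x ≤ K * (((k:ℝ)+2) * Real.log 2) ^ p) :
    ∃ K₀ : ℝ, 0 ≤ K₀ ∧ ∀ T : Finset α, (∀ x ∈ T, x ∈ G) →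
      ∑ x ∈ T, f x * w x ≤ K₀ := by
  classical
  have hlog2 : 0 < Real.log 2 := Real.log_pos (by norm_num)
  have hK : 0 ≤ K := by
    have h := hpart 0 ∅ (by simp)
    simp only [Finset.sum_empty] at h
    have hpos : (0:ℝ) < (((0:ℕ):ℝ)+2) * Real.log 2 := by positivity
    nlinarith [pow_pos hpos p]
  have hsummable : Summable (fun k : ℕ => ρ ^ k * ((k:ℝ)+2)^p) := by
    have h1 : Summable (fun k : ℕ => ((k:ℝ))^p * ρ^k) :=
      summable_pow_mul_geometric_of_norm_lt_one p (by rw [Real.norm_eq_abs, abs_of_pos hρ0]; exact hρ1)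
    have h2 : Summable (fun k : ℕ => (((k+2:ℕ)):ℝ)^p * ρ^(k+2)) :=
      (summable_nat_add_iff 2).mpr h1
    have h3 : Summable (fun k : ℕ => ((((k+2:ℕ)):ℝ)^p * ρ^(k+2)) * (ρ⁻¹)^2) :=
      h2.mul_right _
    refine h3.congr (fun k => ?_)
    push_cast
    field_simp
    ring
  set S := ∑' k : ℕ, ρ ^ k * ((k:ℝ)+2)^p with hS
  have hS0 : 0 ≤ S := tsum_nonneg (fun k => by positivity)
  set C' := max C 1 with hC'
  have hC'0 : (0:ℝ) ≤ C' := le_trans zero_le_one (le_max_right _ _)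
  refine ⟨C' * K * (Real.log 2)^p * S, by positivity, ?_⟩
  intro T hTG
  set κ : α → ℕ := fun x => if r x ≤ 4 then 0 else Nat.log 2 ⌊r x⌋₊ - 1 with hκ
  set N := T.sup κ with hN
  have hmap : ∀ x ∈ T, κ x ∈ Finset.range (N+1) := fun x hx =>
    Finset.mem_range.mpr (Nat.lt_succ_of_le (Finset.le_sup hx))
  rw [← Finset.sum_fiberwise_of_maps_to hmap (fun x => f x * w x)]
  have hterm : ∀ k ∈ Finset.range (N+1),
      ∑ x ∈ T.filter (fun x => κ x = k), f x * w x
        ≤ (C' * ρ ^ k) * (K * (((k:ℝ)+2) * Real.log 2) ^ p) := by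
    intro k _
    have hwk : ∀ x ∈ T.filter (fun x => κ x = k), w x ≤ C' * ρ ^ k := by
      intro x hx
      rw [Finset.mem_filter] at hx
      obtain ⟨hxT, hxk⟩ := hx
      rcases Nat.eq_zero_or_pos k with rfl | hk1
      · calc w x ≤ 1 := hw1 x (hTG x hxT)
          _ ≤ C' * ρ ^ 0 := by rw [pow_zero, mul_one]; exact le_max_right _ _
      · have h2 := (kappa_facts (r x) (hr x)).2
        have hκx : (if r x ≤ 4 then 0 else Nat.log 2 ⌊r x⌋₊ - 1) = k := hxk
        rw [hκx] at h2
        have hrx : (2:ℝ) ^ (k+1) ≤ r x := h2 (by omega)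
        calc w x ≤ C * ρ ^ k := hwr x (hTG x hxT) k hrx
          _ ≤ C' * ρ ^ k := by
            apply mul_le_mul_of_nonneg_right (le_max_left _ _) (by positivity)
    have hstep : ∑ x ∈ T.filter (fun x => κ x = k), f x * w x
        ≤ (C' * ρ ^ k) * ∑ x ∈ T.filter (fun x => κ x = k), f x := by
      rw [Finset.mul_sum]
      refine Finset.sum_le_sum (fun x hx => ?_)
      have hxG : x ∈ G := hTG x (Finset.mem_filter.mp hx).1
      calc f x * w x ≤ f x * (C' * ρ ^ k) :=
            mul_le_mul_of_nonneg_left (hwk x hx) (hf x hxG)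
        _ = (C' * ρ ^ k) * f x := by ring
    refine le_trans hstep ?_
    apply mul_le_mul_of_nonneg_left ?_ (by positivity)
    apply hpart k
    intro x hx
    rw [Finset.mem_filter] at hx
    refine ⟨hTG x hx.1, ?_⟩
    have h1 := (kappa_facts (r x) (hr x)).1
    have hκx : (if r x ≤ 4 then 0 else Nat.log 2 ⌊r x⌋₊ - 1) = k := hx.2
    rwa [hκx] at h1
  refine le_trans (Finset.sum_le_sum hterm) ?_
  have heq : ∀ k : ℕ, (C' * ρ ^ k) * (K * (((k:ℝ)+2) * Real.log 2) ^ p)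
      = (C' * K * (Real.log 2)^p) * (ρ ^ k * ((k:ℝ)+2)^p) := by
    intro k; rw [mul_pow]; ring
  calc ∑ k ∈ Finset.range (N+1), (C' * ρ ^ k) * (K * (((k:ℝ)+2) * Real.log 2) ^ p)
      = (C' * K * (Real.log 2)^p) * ∑ k ∈ Finset.range (N+1), ρ ^ k * ((k:ℝ)+2)^p := by
        rw [Finset.mul_sum]
        exact Finset.sum_congr rfl (fun k _ => heq k)
    _ ≤ (C' * K * (Real.log 2)^p) * S := by
        apply mul_le_mul_of_nonneg_left ?_ (by positivity)
        exact hsummable.sum_le_tsum _ (fun k _ => by positivity)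
    _ = C' * K * (Real.log 2)^p * S := by ring



noncomputable def muF {n : ℕ} (X : Matrix (Fin (n+1)) (Fin (n+1)) ℂ) : ℝ :=
  Finset.univ.sup' ⟨0, Finset.mem_univ 0⟩ (fun i => Complex.normSq (X i i))

noncomputable def fF (m' : ℝ) {n : ℕ} (X : Matrix (Fin (n+1)) (Fin (n+1)) ℂ) : ℝ :=
  1 / ‖(X * Xᴴ).det‖ ^ m'

noncomputable def wF (e : ℝ) {n : ℕ} (X : Matrix (Fin (n+1)) (Fin (n+1)) ℂ) : ℝ :=
  1 / muF X ^ e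

lemma muF_max {n : ℕ} (X : Matrix (Fin (n+1)) (Fin (n+1)) ℂ) (j : Fin (n+1)) :
    Complex.normSq (X j j) ≤ muF X := by
  unfold muF
  exact Finset.le_sup' (fun i => Complex.normSq (X i i)) (Finset.mem_univ j)

lemma muF_exists {n : ℕ} (X : Matrix (Fin (n+1)) (Fin (n+1)) ℂ) :
    ∃ i₁, muF X = Complex.normSq (X i₁ i₁) := by
  unfold muF
  obtain ⟨i₁, _, h⟩ := Finset.exists_mem_eq_sup' (⟨0, Finset.mem_univ 0⟩ :
    (Finset.univ : Finset (Fin (n+1))).Nonempty) (fun i => Complex.normSq (X i i))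
  exact ⟨i₁, h⟩

lemma facts_mat {n : ℕ} (X : Matrix (Fin (n+1)) (Fin (n+1)) ℂ) (hd : X.IsDiag)
    (hdet1 : 1 ≤ ‖(X * Xᴴ).det‖) :
    (∀ i, 0 < Complex.normSq (X i i)) ∧ (1 ≤ ∏ i, Complex.normSq (X i i)) ∧ 1 ≤ muF X := by
  have hP : 1 ≤ ∏ i, Complex.normSq (X i i) := by rw [← abs_det X hd]; exact hdet1
  have hpos : ∀ i, 0 < Complex.normSq (X i i) := by
    intro i
    rcases (Complex.normSq_nonneg (X i i)).lt_or_eq with h | h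
    · exact h
    · exfalso
      have h0 : ∏ i, Complex.normSq (X i i) = 0 :=
        Finset.prod_eq_zero (Finset.mem_univ i) h.symm
      rw [h0] at hP; linarith
  obtain ⟨i₁, hi₁⟩ := muF_exists X
  have hmu1 : 1 ≤ muF X := by
    rw [hi₁]
    exact max_ge_one _ (fun i => (Complex.normSq_nonneg _)) hP (fun j => hi₁ ▸ muF_max X j)
  exact ⟨hpos, hP, hmu1⟩

lemma pointwise_mat {n : ℕ} (X : Matrix (Fin (n+1)) (Fin (n+1)) ℂ) (hd : X.IsDiag)
    (hdet1 : 1 ≤ ‖(X * Xᴴ).det‖)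
    {c m a : ℝ} (hc : 1 ≤ c) (ha0 : 0 < a) (ha1 : a ≤ 1) (ham : a ≤ m) :
    1 / (((1 : Matrix (Fin (n+1)) (Fin (n+1)) ℂ) + (c : ℂ) • (X * Xᴴ)).det).re ^ m
      ≤ c ^ (1 - ((n+1:ℕ):ℝ) * m) *
        (fF (m - a) X * wF (a * ((1:ℝ)/((max ((n+1)-1) 1 : ℕ) : ℝ))) X) := by
  obtain ⟨hpos, hP, hmu1⟩ := facts_mat X hd hdet1
  obtain ⟨i₁, hi₁⟩ := muF_exists X
  have hmax : ∀ j, Complex.normSq (X j j) ≤ Complex.normSq (X i₁ i₁) :=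
    fun j => hi₁ ▸ muF_max X j
  have hpw := pointwise (Nat.succ_pos n) (fun i => Complex.normSq (X i i)) hpos hP
    hc ha0 ha1 ham hmax
  rw [det_one_add_re X hd c]
  beta_reduce at hpw
  simp only [Nat.succ_eq_add_one] at hpw
  refine le_trans hpw ?_
  have h1 : ‖(X * Xᴴ).det‖ = ∏ i, Complex.normSq (X i i) := abs_det X hd
  unfold fF wF
  rw [h1, hi₁]
  rw [div_eq_mul_inv, mul_inv, one_div, one_div]
  exact le_of_eq (by ring)

theorem stmt13 (n : ℕ) (hn : 0 < n)
    (b : Fin (2 * n) → Matrix (Fin n) (Fin n) ℂ)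
    (hb : LinearIndependent ℝ b)
    (L : Set (Matrix (Fin n) (Fin n) ℂ))
    (hL : ∀ X, X ∈ L ↔ X ∈ Submodule.span ℤ (Set.range b))
    (hdiag : ∀ X ∈ L, X.IsDiag)
    (hdet : ∀ X ∈ L, X ≠ 0 → 1 ≤ ‖(X * Xᴴ).det‖)
    (hsum : ∀ m : ℝ, 1 ≤ m → ∃ K : ℝ, ∀ M : ℝ, 2 ≤ M →
      ∑' X : {X : Matrix (Fin n) (Fin n) ℂ // X ∈ L ∧ X ≠ 0 ∧ frobNorm X ≤ M},
          1 / ‖(X.1 * X.1ᴴ).det‖ ^ m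
        ≤ K * Real.log M ^ (3 * n - 1)) :
    ∀ m : ℝ, 1 < m → ∃ K' : ℝ, ∀ c : ℝ, 1 ≤ c → ∀ M : ℝ,
      ∑' X : {X : Matrix (Fin n) (Fin n) ℂ // X ∈ L ∧ X ≠ 0 ∧ frobNorm X ≤ M},
          1 / (((1 : Matrix (Fin n) (Fin n) ℂ) + (c : ℂ) • (X.1 * X.1ᴴ)).det).re ^ m
        ≤ K' * c ^ (1 - (n : ℝ) * m) := by
  intro m hm
  classical
  obtain ⟨N, rfl⟩ : ∃ N, n = N + 1 := ⟨n - 1, by omega⟩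
  set a : ℝ := min (m - 1) 1 / 2 with ha_def
  have hminl := min_le_left (m-1) 1
  have hminr := min_le_right (m-1) 1
  have hmin0 : 0 < min (m-1) 1 := lt_min (by linarith) one_pos
  have ha0 : 0 < a := by rw [ha_def]; linarith
  have ha1 : a ≤ 1 := by rw [ha_def]; linarith
  have ham : a ≤ m := by rw [ha_def]; linarith
  have hma : 1 ≤ m - a := by rw [ha_def] at *; linarith
  obtain ⟨K, hK⟩ := hsum (m - a) hma
  have hmaxpos : (0:ℝ) < ((max ((N+1)-1) 1 : ℕ) : ℝ) := by
    have h1 : 1 ≤ max ((N+1)-1) 1 := le_max_right _ _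
    exact_mod_cast Nat.lt_of_lt_of_le Nat.zero_lt_one h1
  set ε : ℝ := a * ((1:ℝ) / ((max ((N+1)-1) 1 : ℕ) : ℝ)) with hε_def
  have hε0 : 0 < ε := by rw [hε_def]; positivity
  set G : Set (Matrix (Fin (N+1)) (Fin (N+1)) ℂ) := {X | X ∈ L ∧ X ≠ 0} with hG_def
  have hGfacts : ∀ X ∈ G, X.IsDiag ∧ 1 ≤ ‖(X * Xᴴ).det‖ := by
    intro X hX
    obtain ⟨h1, h2⟩ := hX
    exact ⟨hdiag X h1, hdet X h1 h2⟩
  -- partial sums bound from hsum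
  have hpart : ∀ k : ℕ, ∀ T : Finset (Matrix (Fin (N+1)) (Fin (N+1)) ℂ),
      (∀ X ∈ T, X ∈ G ∧ frobNorm X ≤ 2^(k+2)) →
      ∑ X ∈ T, fF (m-a) X ≤ K * (((k:ℝ)+2) * Real.log 2) ^ (3*(N+1)-1) := by
    intro k T hT
    have hM'2 : (2:ℝ) ≤ 2^(k+2) := by
      calc (2:ℝ) = 2^1 := (pow_one 2).symm
        _ ≤ 2^(k+2) := pow_le_pow_right₀ (by norm_num) (by omega)
    have hKb := hK ((2:ℝ)^(k+2)) hM'2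
    have hlog : Real.log ((2:ℝ)^(k+2)) = ((k:ℝ)+2) * Real.log 2 := by
      rw [Real.log_pow]; push_cast; ring
    rw [hlog] at hKb
    have hfin : {X : Matrix (Fin (N+1)) (Fin (N+1)) ℂ |
        X ∈ L ∧ X ≠ 0 ∧ frobNorm X ≤ (2:ℝ)^(k+2)}.Finite := by
      refine Set.Finite.subset (lattice_finite b hb ((2:ℝ)^(k+2))) ?_
      rintro X ⟨h1, h2, h3⟩
      exact ⟨(hL X).mp h1, h2, h3⟩
    haveI hfinsub : Finite {X : Matrix (Fin (N+1)) (Fin (N+1)) ℂ //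
        X ∈ L ∧ X ≠ 0 ∧ frobNorm X ≤ (2:ℝ)^(k+2)} := hfin.to_subtype
    have hsummable : Summable (fun x : {X : Matrix (Fin (N+1)) (Fin (N+1)) ℂ //
        X ∈ L ∧ X ≠ 0 ∧ frobNorm X ≤ (2:ℝ)^(k+2)} => fF (m-a) (x : Matrix (Fin (N+1)) (Fin (N+1)) ℂ)) :=
      Summable.of_finite
    have h1 : ∑ X ∈ T, fF (m-a) X = ∑ x ∈ T.subtype
        (fun X => X ∈ L ∧ X ≠ 0 ∧ frobNorm X ≤ (2:ℝ)^(k+2)),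
        fF (m-a) (x : Matrix (Fin (N+1)) (Fin (N+1)) ℂ) := by
      rw [Finset.sum_subtype_eq_sum_filter, Finset.filter_true_of_mem]
      intro X hX
      obtain ⟨⟨hXL, hX0⟩, hXfr⟩ := hT X hX
      exact ⟨hXL, hX0, hXfr⟩
    rw [h1]
    refine le_trans (hsummable.sum_le_tsum _ (fun x _ => by unfold fF; positivity)) ?_
    exact hKb
  -- geometric decay data
  have h4e : 1 < (4:ℝ)^ε :=
    (Real.one_lt_rpow_iff_of_pos (by norm_num)).mpr (Or.inl ⟨by norm_num, hε0⟩)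
  set ρ : ℝ := ((4:ℝ)^ε)⁻¹ with hρ_def
  have hρ0 : 0 < ρ := by rw [hρ_def]; positivity
  have hρ1 : ρ < 1 := by rw [hρ_def]; exact inv_lt_one_of_one_lt₀ h4e
  have hC0 : (0:ℝ) ≤ (((N+1:ℕ)):ℝ)^ε := Real.rpow_nonneg (Nat.cast_nonneg _) _
  have hw1 : ∀ X ∈ G, wF ε X ≤ 1 := by
    intro X hX
    obtain ⟨hd, hdt⟩ := hGfacts X hX
    obtain ⟨_, _, hmu1⟩ := facts_mat X hd hdt
    have h1 : (1:ℝ) ≤ muF X ^ ε := by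
      have h2 := Real.rpow_le_rpow_of_exponent_le hmu1 (le_of_lt hε0 : (0:ℝ) ≤ ε)
      rwa [Real.rpow_zero] at h2
    unfold wF
    rw [div_le_one (by positivity)]
    exact h1
  have hf0 : ∀ X ∈ G, 0 ≤ fF (m-a) X := fun X _ => by unfold fF; positivity
  have hwr : ∀ X ∈ G, ∀ k : ℕ, (2:ℝ)^(k+1) ≤ frobNorm X →
      wF ε X ≤ (((N+1:ℕ)):ℝ)^ε * ρ^k := by
    intro X hX k hk
    obtain ⟨hd, hdt⟩ := hGfacts X hX
    obtain ⟨hpos, hP, hmu1⟩ := facts_mat X hd hdt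
    have hsuml : ∑ i, Complex.normSq (X i i) ≤ (((N+1:ℕ)):ℝ) * muF X := by
      calc ∑ i, Complex.normSq (X i i) ≤ ∑ _i : Fin (N+1), muF X :=
            Finset.sum_le_sum (fun i _ => muF_max X i)
        _ = (((N+1:ℕ)):ℝ) * muF X := by
            rw [Finset.sum_const, Finset.card_univ, Fintype.card_fin, nsmul_eq_mul]
    have hfrob2 : (frobNorm X)^2 = ∑ i, Complex.normSq (X i i) := frob_sq X hd
    have h4k : (4:ℝ)^(k+1) ≤ (((N+1:ℕ)):ℝ) * muF X := by
      have h1 : ((2:ℝ)^(k+1))^2 ≤ (frobNorm X)^2 :=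
        pow_le_pow_left₀ (by positivity) hk 2
      have h2 : ((2:ℝ)^(k+1))^2 = (4:ℝ)^(k+1) := by
        rw [← pow_mul, mul_comm (k+1) 2, pow_mul]; norm_num
      rw [h2, hfrob2] at h1
      linarith
    have hnpos : (0:ℝ) < ((N+1:ℕ):ℝ) := by positivity
    have hble : (4:ℝ)^(k+1)/((N+1:ℕ):ℝ) ≤ muF X := by
      rw [div_le_iff₀ hnpos]; linarith
    have hmue : ((4:ℝ)^(k+1)/((N+1:ℕ):ℝ)) ^ ε ≤ (muF X) ^ ε :=
      Real.rpow_le_rpow (by positivity) hble hε0.le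
    have hwle : wF ε X ≤ 1 / (((4:ℝ)^(k+1)/((N+1:ℕ):ℝ)) ^ ε) := by
      unfold wF
      exact one_div_le_one_div_of_le (by positivity) hmue
    refine le_trans hwle ?_
    have he1 : ((4:ℝ)^(k+1)/((N+1:ℕ):ℝ)) ^ ε = ((4:ℝ)^(k+1))^ε / ((N+1:ℕ):ℝ)^ε :=
      Real.div_rpow (by positivity) (Nat.cast_nonneg _) ε
    have he2 : ((4:ℝ)^(k+1))^ε = ((4:ℝ)^ε)^(k+1) := by
      rw [← Real.rpow_natCast (4:ℝ) (k+1), ← Real.rpow_mul (by norm_num : (0:ℝ) ≤ 4),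
        mul_comm, Real.rpow_mul (by norm_num : (0:ℝ) ≤ 4), Real.rpow_natCast]
    rw [he1, he2, one_div_div]
    rw [hρ_def, div_eq_mul_inv, ← inv_pow]
    have h3 : (((4:ℝ)^ε)⁻¹)^(k+1) ≤ (((4:ℝ)^ε)⁻¹)^k :=
      pow_le_pow_of_le_one (by positivity) (inv_le_one_of_one_le₀ h4e.le) (by omega)
    exact mul_le_mul_of_nonneg_left h3 hC0
  obtain ⟨K₀, hK₀0, hK₀⟩ := dyadic G (fF (m-a)) (wF ε) frobNorm hf0 hw1
    (fun X => frobNorm_nonneg X) hC0 hρ0 hρ1 hwr hpart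
  refine ⟨K₀, ?_⟩
  intro c hc M
  have hc0 : (0:ℝ) < c := lt_of_lt_of_le one_pos hc
  have hrpow0 : (0:ℝ) ≤ c ^ (1 - (((N+1):ℕ):ℝ) * m) := Real.rpow_nonneg hc0.le _
  refine tsum_le_of_sum_le' (mul_nonneg hK₀0 hrpow0) ?_
  intro s
  set T := s.image Subtype.val with hT_def
  have hTG : ∀ X ∈ T, X ∈ G := by
    intro X hX
    rw [hT_def, Finset.mem_image] at hX
    obtain ⟨x, _, rfl⟩ := hX
    exact ⟨x.2.1, x.2.2.1⟩
  have hinj : ∀ x ∈ s, ∀ y ∈ s, (Subtype.val x : Matrix (Fin (N+1)) (Fin (N+1)) ℂ)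
      = Subtype.val y → x = y := fun x _ y _ h => Subtype.ext h
  have himg : ∑ X ∈ T, (fF (m-a) X * wF ε X)
      = ∑ x ∈ s, (fF (m-a) (x : Matrix (Fin (N+1)) (Fin (N+1)) ℂ)
          * wF ε (x : Matrix (Fin (N+1)) (Fin (N+1)) ℂ)) := by
    rw [hT_def]
    exact Finset.sum_image hinj
  have hstep : ∀ x ∈ s,
      1 / (((1 : Matrix (Fin (N+1)) (Fin (N+1)) ℂ) + (c:ℂ) • ((x:Matrix (Fin (N+1)) (Fin (N+1)) ℂ)
          * (x:Matrix (Fin (N+1)) (Fin (N+1)) ℂ)ᴴ)).det).re ^ m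
        ≤ c ^ (1 - (((N+1):ℕ):ℝ) * m) * (fF (m-a) (x : Matrix (Fin (N+1)) (Fin (N+1)) ℂ)
            * wF ε (x : Matrix (Fin (N+1)) (Fin (N+1)) ℂ)) := by
    intro x _
    have hxG : (x : Matrix (Fin (N+1)) (Fin (N+1)) ℂ) ∈ G := ⟨x.2.1, x.2.2.1⟩
    obtain ⟨hd, hdt⟩ := hGfacts _ hxG
    have h := pointwise_mat (n := N) (x : Matrix (Fin (N+1)) (Fin (N+1)) ℂ) hd hdt hc ha0 ha1 ham
    rw [hε_def]
    exact h
  calc ∑ x ∈ s, 1 / (((1 : Matrix (Fin (N+1)) (Fin (N+1)) ℂ)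
        + (c:ℂ) • ((x:Matrix (Fin (N+1)) (Fin (N+1)) ℂ)
          * (x:Matrix (Fin (N+1)) (Fin (N+1)) ℂ)ᴴ)).det).re ^ m
      ≤ ∑ x ∈ s, c ^ (1 - (((N+1):ℕ):ℝ) * m) * (fF (m-a) (x : Matrix (Fin (N+1)) (Fin (N+1)) ℂ)
          * wF ε (x : Matrix (Fin (N+1)) (Fin (N+1)) ℂ)) := Finset.sum_le_sum hstep
    _ = c ^ (1 - (((N+1):ℕ):ℝ) * m) * ∑ x ∈ s, (fF (m-a) (x : Matrix (Fin (N+1)) (Fin (N+1)) ℂ)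
          * wF ε (x : Matrix (Fin (N+1)) (Fin (N+1)) ℂ)) := by rw [Finset.mul_sum]
    _ = c ^ (1 - (((N+1):ℕ):ℝ) * m) * ∑ X ∈ T, (fF (m-a) X * wF ε X) := by rw [himg]
    _ ≤ c ^ (1 - (((N+1):ℕ):ℝ) * m) * K₀ := mul_le_mul_of_nonneg_left (hK₀ T hTG) hrpow0
    _ = K₀ * c ^ (1 - (((N+1):ℕ):ℝ) * m) := mul_comm _ _
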